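/- Let (S, P) be a finite Markov chain, T ⊆ S a target set, s ∈ S with s ∉ T, and let p be the reachability-probability vector of (P, T). Let q : S → ℝ be the pointwise-least nonnegative function satisfying q t = 1 for t ∈ T, q s = 0, and q t = ∑_{t'} P t t' · q t' for t ∉ T with t ≠ s (the probability of reaching T without passing through s), and let ρ : S → ℝ be the pointwise-least nonnegative function satisfying ρ t = 0 for t ∈ T, ρ s = 1, and ρ t = ∑_{t'} P t t' · ρ t' for t ∉ T with t ≠ s (the probability of reaching s before T); assume these least elements exist. Then p s = (∑_{s'} P s s' · q s') + (∑_{s'} P s s' · ρ s') · p s. Moreover, if p s > 0 then ∑_{s'} P s s' · ρ s' < 1 and hence p s = (∑_{s'} P s s' · q s') / (1 − ∑_{s'} P s s' · ρ s'). -/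

import Mathlib

open Finset

/-- A stochastic matrix over a finite state space. -/
def IsStochastic {S : Type*} [Fintype S] (P : S → S → ℝ) : Prop :=
  (∀ s s', 0 ≤ P s s') ∧ ∀ s, ∑ s', P s s' = 1

/-- A solution of the reachability equation system for target set `T`. -/
def ReachSol {S : Type*} [Fintype S] (P : S → S → ℝ) (T : Set S) (q : S → ℝ) : Prop :=
  (∀ s, 0 ≤ q s) ∧ (∀ s ∈ T, q s = 1) ∧ ∀ s ∉ T, q s = ∑ s', P s s' * q s'

/-- `p` is the reachability-probability vector: the pointwise-least solution. -/
def IsReachVec {S : Type*} [Fintype S] (P : S → S → ℝ) (T : Set S) (p : S → ℝ) : Prop :=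
  ReachSol P T p ∧ ∀ q, ReachSol P T q → ∀ s, p s ≤ q s

/-- A solution of the equation system for reaching `T` without passing through `s`. -/
def AvoidReachSol {S : Type*} [Fintype S] (P : S → S → ℝ) (T : Set S) (s : S)
    (q : S → ℝ) : Prop :=
  (∀ t, 0 ≤ q t) ∧ (∀ t ∈ T, q t = 1) ∧ q s = 0 ∧
    ∀ t, t ∉ T → t ≠ s → q t = ∑ t', P t t' * q t'

/-- A solution of the equation system for reaching `s` before `T`. -/
def ReachBeforeSol {S : Type*} [Fintype S] (P : S → S → ℝ) (T : Set S) (s : S)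
    (ρ : S → ℝ) : Prop :=
  (∀ t, 0 ≤ ρ t) ∧ (∀ t ∈ T, ρ t = 0) ∧ ρ s = 1 ∧
    ∀ t, t ∉ T → t ≠ s → ρ t = ∑ t', P t t' * ρ t'

open scoped Classical in
noncomputable def Fop {S : Type*} [Fintype S] (P : S → S → ℝ) (T : Set S) (s : S)
    (x : S → ℝ) : S → ℝ :=
  fun t => if t ∈ T then 0 else if t = s then 1 else ∑ t', P t t' * x t'

lemma Fop_mono {S : Type*} [Fintype S] (P : S → S → ℝ) (hP0 : ∀ a b, 0 ≤ P a b)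
    (T : Set S) (s : S) {x y : S → ℝ} (h : ∀ t, x t ≤ y t) :
    ∀ t, Fop P T s x t ≤ Fop P T s y t := by
  intro t
  unfold Fop
  split_ifs
  · exact le_refl 0
  · exact le_refl 1
  · exact Finset.sum_le_sum fun i _ => mul_le_mul_of_nonneg_left (h i) (hP0 t i)

lemma rho_le_supersol {S : Type*} [Fintype S] (P : S → S → ℝ) (hP0 : ∀ a b, 0 ≤ P a b)
    (T : Set S) (s : S) (hs : s ∉ T) (ρ : S → ℝ)
    (hρ : ReachBeforeSol P T s ρ ∧ ∀ ρ', ReachBeforeSol P T s ρ' → ∀ t, ρ t ≤ ρ' t)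
    (w : S → ℝ) (hw0 : ∀ t, 0 ≤ w t) (hws : 1 ≤ w s)
    (hwe : ∀ t, t ∉ T → t ≠ s → ∑ t', P t t' * w t' ≤ w t) :
    ∀ t, ρ t ≤ w t := by
  classical
  set a : ℕ → S → ℝ := fun n => (Fop P T s)^[n] (fun _ => 0) with ha
  -- F w ≤ w
  have hFw : ∀ t, Fop P T s w t ≤ w t := by
    intro t
    unfold Fop
    split_ifs with h1 h2
    · exact hw0 t
    · subst h2; exact hws
    · exact hwe t h1 h2
  -- a n ≤ w
  have haw : ∀ n t, a n t ≤ w t := by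
    intro n
    induction n with
    | zero => simpa [ha] using hw0
    | succ n ih =>
        intro t
        have : a (n+1) = Fop P T s (a n) := by
          simp [ha, Function.iterate_succ_apply']
        rw [this]
        exact le_trans (Fop_mono P hP0 T s ih t) (hFw t)
  -- 0 ≤ a n
  have ha0 : ∀ n t, 0 ≤ a n t := by
    intro n
    induction n with
    | zero => simp [ha]
    | succ n ih =>
        intro t
        have : a (n+1) = Fop P T s (a n) := by
          simp [ha, Function.iterate_succ_apply']
        rw [this]
        unfold Fop
        split_ifs
        · exact le_refl 0
        · exact zero_le_one
        · exact Finset.sum_nonneg fun i _ => mul_nonneg (hP0 t i) (ih i)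
  -- monotone in n
  have hmono : ∀ t, Monotone (fun n => a n t) := by
    have step : ∀ n t, a n t ≤ a (n+1) t := by
      intro n
      induction n with
      | zero =>
          intro t
          have h0 : a 0 t = 0 := by simp [ha]
          rw [h0]
          exact ha0 1 t
      | succ n ih =>
          intro t
          have e1 : a (n+1) = Fop P T s (a n) := by
            simp [ha, Function.iterate_succ_apply']
          have e2 : a (n+2) = Fop P T s (a (n+1)) := by
            simp [ha, Function.iterate_succ_apply']
          rw [e1, e2]
          exact Fop_mono P hP0 T s ih t
    intro t
    exact monotone_nat_of_le_succ fun n => step n t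
  -- limit
  have hbdd : ∀ t, BddAbove (Set.range fun n => a n t) :=
    fun t => ⟨w t, by rintro x ⟨n, rfl⟩; exact haw n t⟩
  set L : S → ℝ := fun t => ⨆ n, a n t with hL
  have htend : ∀ t, Filter.Tendsto (fun n => a n t) Filter.atTop (nhds (L t)) :=
    fun t => tendsto_atTop_ciSup (hmono t) (hbdd t)
  have hLw : ∀ t, L t ≤ w t := fun t => ciSup_le fun n => haw n t
  have hL0 : ∀ t, 0 ≤ L t := fun t => le_trans (ha0 0 t) (le_ciSup (hbdd t) 0)
  -- L is a fixed point
  have hfix : ∀ t, Fop P T s L t = L t := by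
    intro t
    have h1 : Filter.Tendsto (fun n => a (n+1) t) Filter.atTop (nhds (L t)) :=
      (htend t).comp (Filter.tendsto_add_atTop_nat 1)
    have h2 : Filter.Tendsto (fun n => Fop P T s (a n) t) Filter.atTop (nhds (Fop P T s L t)) := by
      unfold Fop
      split_ifs
      · exact tendsto_const_nhds
      · exact tendsto_const_nhds
      · exact tendsto_finset_sum _ fun i _ => (htend i).const_mul (P t i)
    have h3 : (fun n => a (n+1) t) = fun n => Fop P T s (a n) t := by
      funext n
      simp [ha, Function.iterate_succ_apply']
    rw [h3] at h1
    exact tendsto_nhds_unique h2 h1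
  -- L is a ReachBeforeSol
  have hLsol : ReachBeforeSol P T s L := by
    refine ⟨hL0, ?_, ?_, ?_⟩
    · intro t ht
      have := hfix t
      unfold Fop at this
      rw [if_pos ht] at this
      exact this.symm
    · have := hfix s
      unfold Fop at this
      rw [if_neg hs, if_pos rfl] at this
      exact this.symm
    · intro t ht hts
      have := hfix t
      unfold Fop at this
      rw [if_neg ht, if_neg hts] at this
      exact this.symm
  intro t
  exact le_trans (hρ.2 L hLsol t) (hLw t)

/-- Decomposition of the reachability probability at `s` into reaching `T`
avoiding `s` and returning to `s` before `T`. -/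
theorem reach_prob_decomposition
    {S : Type*} [Fintype S] [Nonempty S]
    (P : S → S → ℝ) (hP : IsStochastic P)
    (T : Set S) (s : S) (hs : s ∉ T)
    (p : S → ℝ) (hp : IsReachVec P T p)
    (q : S → ℝ)
    (hq : AvoidReachSol P T s q ∧ ∀ q', AvoidReachSol P T s q' → ∀ t, q t ≤ q' t)
    (ρ : S → ℝ)
    (hρ : ReachBeforeSol P T s ρ ∧ ∀ ρ', ReachBeforeSol P T s ρ' → ∀ t, ρ t ≤ ρ' t) :
    p s = (∑ s', P s s' * q s') + (∑ s', P s s' * ρ s') * p s ∧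
      (0 < p s → (∑ s', P s s' * ρ s') < 1 ∧
        p s = (∑ s', P s s' * q s') / (1 - ∑ s', P s s' * ρ s')) := by
  obtain ⟨hP0, hP1⟩ := hP
  obtain ⟨⟨hp0, hpT, hpe⟩, hpmin⟩ := hp
  obtain ⟨⟨hq0, hqT, hqs, hqe⟩, hqmin⟩ := hq.imp id id
  obtain ⟨⟨hρ0, hρT, hρs, hρe⟩, hρmin⟩ := hρ.imp id id
  set a : ℝ := ∑ s', P s s' * q s' with hadef
  set b : ℝ := ∑ s', P s s' * ρ s' with hbdef
  have hpseq : p s = ∑ s', P s s' * p s' := hpe s hs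
  have ha0 : 0 ≤ a := Finset.sum_nonneg fun i _ => mul_nonneg (hP0 s i) (hq0 i)
  have hb0 : 0 ≤ b := Finset.sum_nonneg fun i _ => mul_nonneg (hP0 s i) (hρ0 i)
  -- ρ ≤ 1
  have hρ1 : ∀ t, ρ t ≤ 1 := by
    apply rho_le_supersol P hP0 T s hs ρ hρ (fun _ => 1)
    · intro t; exact zero_le_one
    · exact le_refl 1
    · intro t _ _; simp [hP1 t]
  have hb1 : b ≤ 1 := by
    calc b ≤ ∑ s', P s s' * 1 :=
          Finset.sum_le_sum fun i _ => mul_le_mul_of_nonneg_left (hρ1 i) (hP0 s i)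
      _ = 1 := by simp [hP1 s]
  rcases eq_or_lt_of_le (hp0 s) with hps0 | hpspos
  · -- case p s = 0
    have hps0 : p s = 0 := hps0.symm
    have hpA : AvoidReachSol P T s p := ⟨hp0, hpT, hps0, fun t ht _ => hpe t ht⟩
    have hqp : ∀ t, q t ≤ p t := hqmin p hpA
    have haz : a = 0 := by
      have : a ≤ p s := by
        rw [hpseq]
        exact Finset.sum_le_sum fun i _ => mul_le_mul_of_nonneg_left (hqp i) (hP0 s i)
      rw [hps0] at this
      linarith
    constructor
    · rw [hps0, haz]; ring
    · intro h; rw [hps0] at h; exact absurd h (lt_irrefl 0)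
  · -- case 0 < p s
    have hρp : ∀ t, ρ t * p s ≤ p t := by
      have h := rho_le_supersol P hP0 T s hs ρ hρ (fun t => p t / p s)
        (fun t => div_nonneg (hp0 t) (hp0 s))
        (by simp [div_self (ne_of_gt hpspos)])
        (by
          intro t ht hts
          have : ∑ t', P t t' * (p t' / p s) = (∑ t', P t t' * p t') / p s := by
            rw [Finset.sum_div]
            exact Finset.sum_congr rfl fun i _ => (mul_div_assoc _ _ _).symm
          rw [this, ← hpe t ht])
      intro t
      have := h t
      calc ρ t * p s ≤ (p t / p s) * p s :=
            mul_le_mul_of_nonneg_right this (hp0 s)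
        _ = p t := div_mul_cancel₀ _ (ne_of_gt hpspos)
    -- q ≤ p - ρ * p s
    have hq' : AvoidReachSol P T s (fun t => p t - ρ t * p s) := by
      refine ⟨fun t => sub_nonneg.2 (hρp t), ?_, ?_, ?_⟩
      · intro t ht; dsimp only; rw [hpT t ht, hρT t ht]; ring
      · dsimp only; rw [hρs]; ring
      · intro t ht hts
        dsimp only
        rw [hpe t ht, hρe t ht hts]
        simp only [mul_sub, ← mul_assoc, Finset.sum_sub_distrib, ← Finset.sum_mul]
    have hstar : a + b * p s ≤ p s := by
      have h1 : ∀ t, q t ≤ p t - ρ t * p s := hqmin _ hq'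
      have h2 : a ≤ ∑ s', P s s' * (p s' - ρ s' * p s) :=
        Finset.sum_le_sum fun i _ => mul_le_mul_of_nonneg_left (h1 i) (hP0 s i)
      have h3 : ∑ s', P s s' * (p s' - ρ s' * p s)
          = (∑ s', P s s' * p s') - b * p s := by
        simp only [mul_sub, ← mul_assoc, Finset.sum_sub_distrib, ← Finset.sum_mul, hbdef]
      rw [h3, ← hpseq] at h2
      linarith
    have hblt : b < 1 := by
      rcases lt_or_eq_of_le hb1 with h | h
      · exact h
      · exfalso
        have hw : ReachSol P T (fun t => 1 - ρ t) := by
          refine ⟨fun t => sub_nonneg.2 (hρ1 t), ?_, ?_⟩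
          · intro t ht; dsimp only; rw [hρT t ht]; ring
          · intro t ht
            dsimp only
            have key : ∑ t', P t t' * (1 - ρ t') = 1 - ∑ t', P t t' * ρ t' := by
              simp only [mul_sub, mul_one, Finset.sum_sub_distrib, hP1 t]
            by_cases hts : t = s
            · subst hts
              rw [key, hρs, ← hbdef, h]
            · rw [key, ← hρe t ht hts]
        have := hpmin _ hw s
        rw [hρs] at this
        simp at this
        linarith
    have h1b : (0:ℝ) < 1 - b := by linarith
    set c : ℝ := a / (1 - b) with hcdef
    have hc0 : 0 ≤ c := div_nonneg ha0 (le_of_lt h1b)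
    have hceq : c = a + b * c := by
      rw [hcdef]
      field_simp
      ring
    have hq'' : ReachSol P T (fun t => q t + ρ t * c) := by
      refine ⟨fun t => add_nonneg (hq0 t) (mul_nonneg (hρ0 t) hc0), ?_, ?_⟩
      · intro t ht; dsimp only; rw [hqT t ht, hρT t ht]; ring
      · intro t ht
        dsimp only
        have key : ∑ t', P t t' * (q t' + ρ t' * c)
            = (∑ t', P t t' * q t') + (∑ t', P t t' * ρ t') * c := by
          simp only [mul_add, ← mul_assoc, Finset.sum_add_distrib, ← Finset.sum_mul]
        by_cases hts : t = s
        · subst hts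
          rw [key, hqs, hρs, ← hadef, ← hbdef, one_mul, zero_add]
          exact hceq
        · rw [key, ← hqe t ht hts, ← hρe t ht hts]
      
    have hpsc : p s ≤ c := by
      simpa [hqs, hρs] using hpmin _ hq'' s
    have hps_le : p s ≤ a + b * p s := by
      have : p s * (1 - b) ≤ a := by
        rw [hcdef] at hpsc
        exact (le_div_iff₀ h1b).1 hpsc
      nlinarith
    have heq : p s = a + b * p s := le_antisymm hps_le hstar
    refine ⟨heq, fun _ => ⟨hblt, ?_⟩⟩
    rw [eq_div_iff (ne_of_gt h1b)]
    linarith [heq]
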